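/- The map T_{α,β} of the previous statement preserves J₁ᵀ = x₂y₂ + y₁(x₁x₂ + α − 1) − (x₁/y₂)(y₁² − y₁ + β) and J₂ᵀ = y₁ + x₁x₂, and these two functions are in involution with respect to the Poisson bracket {x₁,x₂} = 1, {y₁,y₂} = −y₂, {xᵢ,yⱼ} = 0. -/

import Mathlib

set_option maxHeartbeats 16000000

/-- The Poisson bracket `{x₁,x₂} = 1`, `{y₁,y₂} = −y₂`, `{xᵢ,yⱼ} = 0`. -/
noncomputable def pbrT (f g : ℂ → ℂ → ℂ → ℂ → ℂ) (x₁ x₂ y₁ y₂ : ℂ) : ℂ :=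
  (deriv (fun t => f t x₂ y₁ y₂) x₁ * deriv (fun t => g x₁ t y₁ y₂) x₂ -
   deriv (fun t => f x₁ t y₁ y₂) x₂ * deriv (fun t => g t x₂ y₁ y₂) x₁) -
  y₂ * (deriv (fun t => f x₁ x₂ t y₂) y₁ * deriv (fun t => g x₁ x₂ y₁ t) y₂ -
        deriv (fun t => f x₁ x₂ y₁ t) y₂ * deriv (fun t => g x₁ x₂ t y₂) y₁)

/-- `J₁ᵀ = x₂y₂ + y₁(x₁x₂ + α − 1) − (x₁/y₂)(y₁² − y₁ + β)`. -/
noncomputable def J1T (a b x₁ x₂ y₁ y₂ : ℂ) : ℂ :=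
  x₂ * y₂ + y₁ * (x₁ * x₂ + a - 1) - x₁ / y₂ * (y₁ ^ 2 - y₁ + b)

/-- `J₂ᵀ = y₁ + x₁x₂`. -/
def J2T (x₁ x₂ y₁ y₂ : ℂ) : ℂ := y₁ + x₁ * x₂

lemma deriv_lin (c d t : ℂ) : deriv (fun s => c * s + d) t = c := by
  simpa using (((hasDerivAt_id t).const_mul c).add_const d).deriv

lemma deriv_invmul (c d e t : ℂ) (ht : t ≠ 0) :
    deriv (fun s => c * s + d + e / s) t = c - e / t ^ 2 := by
  have h := ((((hasDerivAt_id t).const_mul c).add_const d).add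
    ((hasDerivAt_inv ht).const_mul e))
  have heq : (fun s : ℂ => c * s + d + e / s) = fun x => c * id x + d + e * x⁻¹ := by
    funext s; simp [div_eq_mul_inv]
  rw [heq, show (fun x : ℂ => c * id x + d + e * x⁻¹) = ((fun x => c * id x + d) + fun y => e * y⁻¹) from rfl, h.deriv]
  ring

lemma key (N1 B P1 D R y₂ J x₂ x₁ a : ℂ) (hy : y₂ ≠ 0) (hD : D ≠ 0)
    (h : (x₂ * y₂ - B) * (x₁ * D - N1) * D + P1 * (N1 * (x₂ * y₂ - B) + (a - 1) * D * y₂)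
        - N1 * R * y₂ = J * (y₂ * D ^ 2)) :
    (x₂ - B / y₂) * (x₁ - N1 / D) + P1 / D * (N1 / D * (x₂ - B / y₂) + a - 1)
      - N1 * R / D ^ 2 = J := by
  have h2 : (x₂ - B / y₂) * (x₁ - N1 / D) + P1 / D * (N1 / D * (x₂ - B / y₂) + a - 1)
      - N1 * R / D ^ 2 =
      ((x₂ * y₂ - B) * (x₁ * D - N1) * D + P1 * (N1 * (x₂ * y₂ - B) + (a - 1) * D * y₂)
        - N1 * R * y₂) / (y₂ * D ^ 2) := by
    field_simp
    ring
  rw [h2, h, mul_div_assoc, div_self (by simp [hy, hD]), mul_one]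

lemma key2 (P1 D E R b : ℂ) (hD : D ≠ 0)
    (h : P1 ^ 2 - P1 * D + b * D ^ 2 = E * R) :
    (P1 / D) ^ 2 - P1 / D + b = E * R / D ^ 2 := by
  rw [← h]; field_simp

lemma key3 (N1 E D R : ℂ) (hD : D ≠ 0) (hE : E ≠ 0) :
    N1 / D / (E / D) * (E * R / D ^ 2) = N1 * R / D ^ 2 := by
  rw [div_div_div_cancel_right₀ hD]
  field_simp

theorem stmt18 (a b x₁ x₂ y₁ y₂ : ℂ) (hy₂ : y₂ ≠ 0)
    (hD : b * x₁ + (y₁ - 1) * y₁ * x₁ + (a + y₁ - 1) * y₂ ≠ 0) :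
    let D := b * x₁ + (y₁ - 1) * y₁ * x₁ + (a + y₁ - 1) * y₂
    let u₁ := (a * x₁ - y₁ * x₁ - y₂) * y₂ / D
    let u₂ := x₂ - (b + (y₁ - 1) * y₁) / y₂
    let v₁ := (b * (a * x₁ - y₂) + (y₁ * x₁ - x₁ + y₂) * (a * y₁ + x₂ * y₂) +
      x₁ * x₂ * (x₁ * (y₁ ^ 2 - y₁ + b) + y₁ * y₂)) / D
    let v₂ := x₁ - (a * x₁ - y₁ * x₁ - y₂) * y₂ / D
    v₂ ≠ 0 →
      J1T a b u₁ u₂ v₁ v₂ = J1T a b x₁ x₂ y₁ y₂ ∧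
      J2T u₁ u₂ v₁ v₂ = J2T x₁ x₂ y₁ y₂ ∧
      pbrT (fun x₁ x₂ y₁ y₂ => J1T a b x₁ x₂ y₁ y₂)
        (fun x₁ x₂ y₁ y₂ => J2T x₁ x₂ y₁ y₂) x₁ x₂ y₁ y₂ = 0 := by
  intro D u₁ u₂ v₁ v₂ hv₂
  have hDd : D = b * x₁ + (y₁ - 1) * y₁ * x₁ + (a + y₁ - 1) * y₂ := rfl
  set P1 : ℂ := b * (a * x₁ - y₂) + (y₁ * x₁ - x₁ + y₂) * (a * y₁ + x₂ * y₂) +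
      x₁ * x₂ * (x₁ * (y₁ ^ 2 - y₁ + b) + y₁ * y₂) with hP1
  set E : ℂ := x₁ * D - (a * x₁ - y₁ * x₁ - y₂) * y₂ with hEdef
  set R : ℂ := x₂*y₂ - x₂*y₁*y₂ + x₂^2*y₂^2 + x₁*x₂*y₁ - x₁*x₂*y₁^2 - x₁*x₂^2*y₂
    + 2*x₁*x₂^2*y₁*y₂ - x₁^2*x₂^2*y₁ + x₁^2*x₂^2*y₁^2 - b*y₁ + b*y₁^2 - 2*b*x₂*y₂
    - b*x₁*x₂ + b*x₁^2*x₂^2 + b^2 + a*y₁ - a*y₁^2 - a*x₂*y₂ + 2*a*x₂*y₁*y₂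
    - 2*a*x₁*x₂*y₁ + 2*a*x₁*x₂*y₁^2 - a*b + 2*a*b*x₁*x₂ - a^2*y₁ + a^2*y₁^2 + a^2*b
    with hRdef
  have hv2eq : v₂ = E / D := by
    rw [hEdef]; show x₁ - (a * x₁ - y₁ * x₁ - y₂) * y₂ / D = _
    field_simp
    have hD' : D ≠ 0 := hD
    rw [sub_div, mul_div_cancel_right₀ _ hD']
  have hE : E ≠ 0 := fun h => hv₂ (by rw [hv2eq, h, zero_div])
  refine ⟨?_, ?_, ?_⟩
  · -- J1T preserved
    have h1 : v₁ ^ 2 - v₁ + b = E * R / D ^ 2 := by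
      refine key2 P1 D E R b hD ?_
      rw [hP1, hEdef, hRdef, hDd]
      ring
    have h3 : u₁ / v₂ * (v₁ ^ 2 - v₁ + b) =
        (a * x₁ - y₁ * x₁ - y₂) * y₂ * R / D ^ 2 := by
      rw [h1, hv2eq]
      exact key3 _ _ _ _ hD hE
    show u₂ * v₂ + v₁ * (u₁ * u₂ + a - 1) - u₁ / v₂ * (v₁ ^ 2 - v₁ + b)
        = J1T a b x₁ x₂ y₁ y₂
    rw [h3]
    refine key ((a * x₁ - y₁ * x₁ - y₂) * y₂) (b + (y₁ - 1) * y₁) P1 D R y₂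
      (J1T a b x₁ x₂ y₁ y₂) x₂ x₁ a hy₂ hD ?_
    have hJ : J1T a b x₁ x₂ y₁ y₂ * (y₂ * D ^ 2) =
        (x₂ * y₂ + y₁ * (x₁ * x₂ + a - 1)) * (y₂ * D ^ 2)
          - x₁ * (y₁ ^ 2 - y₁ + b) * D ^ 2 := by
      simp only [J1T]
      field_simp
    rw [hJ, hP1, hDd, hRdef]
    ring
  · -- J2T preserved
    show v₁ + u₁ * u₂ = J2T x₁ x₂ y₁ y₂
    simp only [J2T, hP1]
    show P1 / D + (a * x₁ - y₁ * x₁ - y₂) * y₂ / D *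
        (x₂ - (b + (y₁ - 1) * y₁) / y₂) = y₁ + x₁ * x₂
    rw [hP1]
    have hD' : D ≠ 0 := hD
    field_simp
    rw [hDd]
    ring
  · -- involution
    have hf1 : deriv (fun t => J1T a b t x₂ y₁ y₂) x₁
        = y₁ * x₂ - (y₁ ^ 2 - y₁ + b) / y₂ := by
      have h : (fun t => J1T a b t x₂ y₁ y₂) =
          fun t => (y₁ * x₂ - (y₁ ^ 2 - y₁ + b) / y₂) * t + (x₂ * y₂ + y₁ * (a - 1)) := by
        funext t; simp only [J1T]; ring
      rw [h, deriv_lin]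
    have hf2 : deriv (fun t => J1T a b x₁ t y₁ y₂) x₂ = y₂ + y₁ * x₁ := by
      have h : (fun t => J1T a b x₁ t y₁ y₂) =
          fun t => (y₂ + y₁ * x₁) * t + (y₁ * (a - 1) - x₁ / y₂ * (y₁ ^ 2 - y₁ + b)) := by
        funext t; simp only [J1T]; ring
      rw [h, deriv_lin]
    have hf4 : deriv (fun t => J1T a b x₁ x₂ y₁ t) y₂
        = x₂ - -(x₁ * (y₁ ^ 2 - y₁ + b)) / y₂ ^ 2 := by
      have h : (fun t => J1T a b x₁ x₂ y₁ t) =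
          fun t => x₂ * t + y₁ * (x₁ * x₂ + a - 1) + -(x₁ * (y₁ ^ 2 - y₁ + b)) / t := by
        funext t; simp only [J1T]; ring
      rw [h, deriv_invmul _ _ _ _ hy₂]
    have hg1 : deriv (fun t => J2T t x₂ y₁ y₂) x₁ = x₂ := by
      have h : (fun t => J2T t x₂ y₁ y₂) = fun t => x₂ * t + y₁ := by
        funext t; simp only [J2T]; ring
      rw [h, deriv_lin]
    have hg2 : deriv (fun t => J2T x₁ t y₁ y₂) x₂ = x₁ := by
      have h : (fun t => J2T x₁ t y₁ y₂) = fun t => x₁ * t + y₁ := by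
        funext t; simp only [J2T]; ring
      rw [h, deriv_lin]
    have hg3 : deriv (fun t => J2T x₁ x₂ t y₂) y₁ = 1 := by
      have h : (fun t => J2T x₁ x₂ t y₂) = fun t => 1 * t + x₁ * x₂ := by
        funext t; simp only [J2T]; ring
      rw [h, deriv_lin]
    have hg4 : deriv (fun t => J2T x₁ x₂ y₁ t) y₂ = 0 := by
      simp [J2T]
    simp only [pbrT, hf1, hf2, hf4, hg1, hg2, hg3, hg4, mul_zero, zero_sub]
    field_simp
    ring
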